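/- Let t ≥ 2 and let p, q, r ≥ 0 be integers with p+q+r ≥ 2. Let G be a K_{2,r}^{p,q}-free graph and let v be a vertex of G of degree d. Then the number of pairs (w, S), where w is a vertex of G different from v and S is a t-element set of common neighbors of v and w, is at most binom(d, t)·(p+q+r−2). -/

import Mathlib

open SimpleGraph Finset

/-- `G` contains a copy of `F`, i.e. `G` has a subgraph isomorphic to `F`. -/
def ContainsCopy {α β : Type*} (F : SimpleGraph α) (G : SimpleGraph β) : Prop :=
  ∃ f : α → β, Function.Injective f ∧ ∀ ⦃a b⦄, F.Adj a b → G.Adj (f a) (f b)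

/-- `G` is `F`-free: it contains no subgraph isomorphic to `F`. -/
def IsFFree {α β : Type*} (F : SimpleGraph α) (G : SimpleGraph β) : Prop :=
  ¬ ContainsCopy F G

/-- `𝒩(H,G)`: the number of subgraphs of `G` isomorphic to `H`. -/
noncomputable def copyCount {α β : Type*} (H : SimpleGraph α) (G : SimpleGraph β) : ℕ :=
  Nat.card {G' : G.Subgraph // Nonempty (G'.coe ≃g H)}

/-- The number of embeddings of `H` into `G` (injective, edge-preserving maps). -/
noncomputable def embCount {α β : Type*} (H : SimpleGraph α) (G : SimpleGraph β) : ℕ :=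
  Nat.card {f : α → β // Function.Injective f ∧ ∀ ⦃a b⦄, H.Adj a b → G.Adj (f a) (f b)}

/-- `ex(n,H,F)`: the maximum number of copies of `H` in an `F`-free graph on `n` vertices. -/
noncomputable def exNum {α β : Type*} (n : ℕ) (H : SimpleGraph α) (F : SimpleGraph β) : ℕ :=
  sSup {k | ∃ G : SimpleGraph (Fin n), IsFFree F G ∧ copyCount H G = k}

/-- The defining relation of `K_{2,r}^{p,q}`: the two vertices `u = inl 0`, `v = inl 1` of the
small side, `r` vertices joined to both, `p` vertices joined only to `u`, `q` vertices joined
only to `v`. -/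
def K2rpqRel (p q r : ℕ) :
    (Fin 2 ⊕ (Fin r ⊕ Fin p ⊕ Fin q)) → (Fin 2 ⊕ (Fin r ⊕ Fin p ⊕ Fin q)) → Prop
  | Sum.inl _, Sum.inr (Sum.inl _) => True
  | Sum.inl i, Sum.inr (Sum.inr (Sum.inl _)) => i = 0
  | Sum.inl i, Sum.inr (Sum.inr (Sum.inr _)) => i = 1
  | _, _ => False

/-- The graph `K_{2,r}^{p,q}` obtained from `K_{2,r}` by adding `p` pendant vertices at `u`
and `q` pendant vertices at `v`, where `u,v` form the side of size 2. -/
def K2rpq (p q r : ℕ) : SimpleGraph (Fin 2 ⊕ (Fin r ⊕ Fin p ⊕ Fin q)) :=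
  SimpleGraph.fromRel (K2rpqRel p q r)

/-- The final set `B` of the greedy partition process: start with `B` the set of vertices of
degree `≠ 2`, and repeatedly move to `A` any non-leaf vertex of `B` with at most two neighbors
in `B`.  The result is the largest subset `S` of the initial `B` in which every non-leaf vertex
has at least three neighbors inside `S`. -/
def finalB {V : Type*} [Fintype V] (T : SimpleGraph V) [DecidableRel T.Adj] : Set V :=
  {v | ∃ S : Set V, v ∈ S ∧ (∀ u ∈ S, T.degree u ≠ 2) ∧
    (∀ u ∈ S, T.degree u ≠ 1 → 3 ≤ Nat.card {w : V // w ∈ S ∧ T.Adj u w})}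

/-- A tree is nice if it has at least 3 vertices and every vertex of the final set `B` is a
leaf. -/
def IsNice {V : Type*} [Fintype V] (T : SimpleGraph V) [DecidableRel T.Adj] : Prop :=
  3 ≤ Fintype.card V ∧ ∀ v ∈ finalB T, T.degree v = 1

/-- The graph on `Fin n` consisting of `⌊n/m⌋` pairwise disjoint copies of `K_m`
(on consecutive blocks of `m` vertices) together with `n - m⌊n/m⌋` isolated vertices. -/
def cliqueBlocks (n m : ℕ) : SimpleGraph (Fin n) :=
  SimpleGraph.fromRel (fun a b =>
    (a : ℕ) / m = (b : ℕ) / m ∧ (a : ℕ) < m * (n / m) ∧ (b : ℕ) < m * (n / m))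


lemma common_bound {V : Type*} [Fintype V] [DecidableEq V]
    (G : SimpleGraph V) [DecidableRel G.Adj] (p q r : ℕ)
    (hfree : IsFFree (K2rpq p q r) G) (u₁ u₂ : V) (h12 : u₁ ≠ u₂) :
    (G.neighborFinset u₁ ∩ G.neighborFinset u₂).card ≤ p + q + r - 1 := by
  by_contra h
  push_neg at h
  have hcard : p + q + r ≤ (G.neighborFinset u₁ ∩ G.neighborFinset u₂).card := by omega
  have hcard' : Fintype.card (Fin r ⊕ Fin p ⊕ Fin q) ≤
      Fintype.card {x // x ∈ G.neighborFinset u₁ ∩ G.neighborFinset u₂} := by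
    simp only [Fintype.card_coe, Fintype.card_sum, Fintype.card_fin]
    omega
  obtain ⟨g⟩ := Function.Embedding.nonempty_of_card_le hcard'
  have hg1 : ∀ x, G.Adj u₁ (g x) := fun x =>
    (SimpleGraph.mem_neighborFinset _ _ _).mp (Finset.mem_inter.mp (g x).2).1
  have hg2 : ∀ x, G.Adj u₂ (g x) := fun x =>
    (SimpleGraph.mem_neighborFinset _ _ _).mp (Finset.mem_inter.mp (g x).2).2
  have hgne1 : ∀ x, (g x : V) ≠ u₁ := by
    intro x h
    have h1 := hg1 x
    rw [h] at h1
    exact G.loopless.irrefl u₁ h1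
  have hgne2 : ∀ x, (g x : V) ≠ u₂ := by
    intro x h
    have h1 := hg2 x
    rw [h] at h1
    exact G.loopless.irrefl u₂ h1
  apply hfree
  refine ⟨Sum.elim (fun i => if i = 0 then u₁ else u₂) (fun x => (g x : V)), ?_, ?_⟩
  · have hf : ∀ i : Fin 2, (if i = 0 then u₁ else u₂) = u₁ ∨ (if i = 0 then u₁ else u₂) = u₂ := by
      intro i; by_cases hi : i = 0 <;> simp [hi]
    rintro (i | x) (j | y) hxy
    · simp only [Sum.elim_inl] at hxy
      fin_cases i <;> fin_cases j <;> simp_all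
    · exfalso
      simp only [Sum.elim_inl, Sum.elim_inr] at hxy
      rcases hf i with h' | h' <;> rw [h'] at hxy
      · exact hgne1 y hxy.symm
      · exact hgne2 y hxy.symm
    · exfalso
      simp only [Sum.elim_inl, Sum.elim_inr] at hxy
      rcases hf j with h' | h' <;> rw [h'] at hxy
      · exact hgne1 x hxy
      · exact hgne2 x hxy
    · simp only [Sum.elim_inr] at hxy
      exact congrArg Sum.inr (g.injective (Subtype.ext hxy))
  · have key : ∀ (i : Fin 2) (x), K2rpqRel p q r (Sum.inl i) (Sum.inr x) →
        G.Adj (if i = 0 then u₁ else u₂) (g x : V) := by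
      rintro i (y | y | y) hrel
      · by_cases hi : i = 0
        · rw [if_pos hi]; exact hg1 _
        · rw [if_neg hi]; exact hg2 _
      · simp only [K2rpqRel] at hrel
        rw [if_pos hrel]; exact hg1 _
      · simp only [K2rpqRel] at hrel
        rw [if_neg (by rw [hrel]; decide)]; exact hg2 _
    rintro a b hab
    rw [K2rpq, SimpleGraph.fromRel_adj] at hab
    obtain ⟨hne, hrel⟩ := hab
    rcases a with i | (x | x | x) <;> rcases b with j | (y | y | y) <;>
      rcases hrel with hrel | hrel <;>
      first
        | exact hrel.elim
        | exact key _ _ hrel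
        | exact (key _ _ hrel).symm

theorem stmt9 {V : Type*} [Fintype V] [DecidableEq V]
    (G : SimpleGraph V) [DecidableRel G.Adj]
    (t p q r : ℕ) (ht : 2 ≤ t) (hpqr : 2 ≤ p + q + r)
    (hfree : IsFFree (K2rpq p q r) G)
    (v : V) (d : ℕ) (hd : G.degree v = d) :
    (Finset.univ.filter fun wS : V × Finset V =>
        wS.1 ≠ v ∧ wS.2.card = t ∧
          wS.2 ⊆ G.neighborFinset v ∩ G.neighborFinset wS.1).card ≤
      Nat.choose d t * (p + q + r - 2) := by
  classical
  subst hd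
  set P := (Finset.univ.filter fun wS : V × Finset V =>
        wS.1 ≠ v ∧ wS.2.card = t ∧
          wS.2 ⊆ G.neighborFinset v ∩ G.neighborFinset wS.1) with hP
  have hfib : P.card = ∑ S ∈ (G.neighborFinset v).powersetCard t,
      (P.filter (fun x => x.2 = S)).card := by
    apply Finset.card_eq_sum_card_fiberwise
    intro x hx
    simp only [Finset.mem_coe, hP, Finset.mem_filter] at hx
    rw [Finset.mem_coe, Finset.mem_powersetCard]
    exact ⟨hx.2.2.2.trans Finset.inter_subset_left, hx.2.2.1⟩
  rw [hfib]
  have hbound : ∀ S ∈ (G.neighborFinset v).powersetCard t,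
      (P.filter (fun x => x.2 = S)).card ≤ p + q + r - 2 := by
    intro S hS
    rw [Finset.mem_powersetCard] at hS
    obtain ⟨hSsub, hScard⟩ := hS
    -- fiber injects into W
    set W := Finset.univ.filter (fun w => w ≠ v ∧ S ⊆ G.neighborFinset v ∩ G.neighborFinset w)
      with hW
    have hinj : (P.filter (fun x => x.2 = S)).card ≤ W.card := by
      apply Finset.card_le_card_of_injOn Prod.fst
      · intro x hx
        rw [Finset.mem_coe, Finset.mem_filter, hP, Finset.mem_filter] at hx
        rw [Finset.mem_coe, hW, Finset.mem_filter]
        exact ⟨Finset.mem_univ _, hx.1.2.1, hx.2 ▸ hx.1.2.2.2⟩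
      · intro x hx y hy hxy
        simp only [Finset.mem_coe, Finset.mem_filter] at hx hy
        exact Prod.ext hxy (hx.2.trans hy.2.symm)
    -- pick two distinct elements of S
    have h1 : 1 < S.card := by omega
    obtain ⟨u₁, hu₁, u₂, hu₂, h12⟩ := Finset.one_lt_card.mp h1
    have hvW : v ∉ W := by
      rw [hW, Finset.mem_filter]
      simp
    have hsub : insert v W ⊆ G.neighborFinset u₁ ∩ G.neighborFinset u₂ := by
      intro w hw
      rw [Finset.mem_insert] at hw
      rw [Finset.mem_inter, SimpleGraph.mem_neighborFinset, SimpleGraph.mem_neighborFinset]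
      rcases hw with rfl | hw
      · have h1 := hSsub hu₁
        have h2 := hSsub hu₂
        rw [SimpleGraph.mem_neighborFinset] at h1 h2
        exact ⟨h1.symm, h2.symm⟩
      · rw [hW, Finset.mem_filter] at hw
        have h1 := hw.2.2 hu₁
        have h2 := hw.2.2 hu₂
        rw [Finset.mem_inter, SimpleGraph.mem_neighborFinset,
          SimpleGraph.mem_neighborFinset] at h1 h2
        exact ⟨h1.2.symm, h2.2.symm⟩
    have hcb := common_bound G p q r hfree u₁ u₂ h12
    have hWc : W.card + 1 ≤ p + q + r - 1 := by
      have := Finset.card_le_card hsub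
      rw [Finset.card_insert_of_notMem hvW] at this
      omega
    omega
  calc ∑ S ∈ (G.neighborFinset v).powersetCard t, (P.filter (fun x => x.2 = S)).card
      ≤ ∑ S ∈ (G.neighborFinset v).powersetCard t, (p + q + r - 2) :=
        Finset.sum_le_sum hbound
    _ = ((G.neighborFinset v).powersetCard t).card * (p + q + r - 2) := by
        rw [Finset.sum_const, smul_eq_mul]
    _ = Nat.choose (G.degree v) t * (p + q + r - 2) := by
        rw [Finset.card_powersetCard, G.card_neighborFinset_eq_degree]
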